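/- Let G be a graph on n labeled vertices with at least two connected components, let u, v ∈ V(G) be vertices with no path between them, and let G' = G/(u∼v) be the graph obtained by identifying u and v. Let q ≥ 1, let {c_H} be real coefficients indexed by unlabeled graphs, and define c'_H as the maximum of |c_{H'}| over all graphs H' that transform to H by contracting at most one pair of disconnected vertices. Then Σ_H |c_H|·P[G_q ≅ H] ≤ Σ_H c'_H·P[G'_q ≅ H], where G_q is the random graph obtained by uniformly q-coloring V(G), deleting monochromatic edges, then deleting isolated vertices. -/

import Mathlib

/-- The graph obtained from `G` by a vertex coloring `φ` by deleting all monochromatic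
edges. (Vertices are retained, so isolated vertices play the role of padding; unlabeled
graphs are represented by graphs on a fixed vertex set up to isomorphism.) -/
def delColor {V : Type*} {q : ℕ} (G : SimpleGraph V) (φ : V → Fin q) : SimpleGraph V where
  Adj a b := G.Adj a b ∧ φ a ≠ φ b
  symm := ⟨fun a b h => ⟨h.1.symm, h.2.symm⟩⟩
  loopless := ⟨fun a h => G.loopless.irrefl a h.1⟩

/-- The graph obtained from `G` by identifying the vertex `v` with the vertex `u`
(the vertex `v` remains, as an isolated vertex). -/
def contractPair {V : Type*} [DecidableEq V] (G : SimpleGraph V) (u v : V) :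
    SimpleGraph V where
  Adj a b := a ≠ b ∧ a ≠ v ∧ b ≠ v ∧
    (G.Adj a b ∨ (a = u ∧ G.Adj v b) ∨ (b = u ∧ G.Adj a v))
  symm := ⟨fun a b h => by
    obtain ⟨h1, h2, h3, h4⟩ := h
    refine ⟨h1.symm, h3, h2, ?_⟩
    rcases h4 with h | ⟨ha, hb⟩ | ⟨hb, ha⟩
    · exact Or.inl h.symm
    · exact Or.inr (Or.inr ⟨ha, hb.symm⟩)
    · exact Or.inr (Or.inl ⟨hb, ha.symm⟩)⟩
  loopless := ⟨fun a h => h.1 rfl⟩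

/-- `H'` may be transformed to `H` by contracting at most one pair of disconnected
vertices (up to isomorphism, as these represent unlabeled graphs). -/
def TransformsTo {V : Type*} [DecidableEq V] (H' H : SimpleGraph V) : Prop :=
  Nonempty (H' ≃g H) ∨
    ∃ a b, a ≠ b ∧ ¬ H'.Reachable a b ∧ Nonempty (contractPair H' a b ≃g H)

lemma delColor_congr {V : Type*} {q : ℕ} (G : SimpleGraph V) (ψ χ : V → Fin q)
    (h : ∀ a b, G.Adj a b → (ψ a = ψ b ↔ χ a = χ b)) :
    delColor G ψ = delColor G χ := by
  ext a b
  show (G.Adj a b ∧ ψ a ≠ ψ b) ↔ (G.Adj a b ∧ χ a ≠ χ b)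
  constructor
  · rintro ⟨h1, h2⟩; exact ⟨h1, fun he => h2 ((h a b h1).2 he)⟩
  · rintro ⟨h1, h2⟩; exact ⟨h1, fun he => h2 ((h a b h1).1 he)⟩

lemma delColor_contract {V : Type*} [DecidableEq V] {q : ℕ} (G : SimpleGraph V)
    (u v : V) (φ : V → Fin q) :
    delColor (contractPair G u v) φ =
      contractPair (delColor G (Function.update φ v (φ u))) u v := by
  ext a b
  show ((a ≠ b ∧ a ≠ v ∧ b ≠ v ∧ _) ∧ φ a ≠ φ b) ↔
    (a ≠ b ∧ a ≠ v ∧ b ≠ v ∧ _)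
  constructor
  · rintro ⟨⟨hab, hav, hbv, hor⟩, hc⟩
    refine ⟨hab, hav, hbv, ?_⟩
    have ha : Function.update φ v (φ u) a = φ a := Function.update_of_ne hav _ _
    have hb : Function.update φ v (φ u) b = φ b := Function.update_of_ne hbv _ _
    have hv : Function.update φ v (φ u) v = φ u := Function.update_self _ _ _
    rcases hor with h | ⟨hau, h⟩ | ⟨hbu, h⟩
    · exact Or.inl ⟨h, by rw [ha, hb]; exact hc⟩
    · exact Or.inr (Or.inl ⟨hau, h, by rw [hv, hb, ← hau]; exact hc⟩)
    · exact Or.inr (Or.inr ⟨hbu, h, by rw [ha, hv, ← hbu]; exact hc⟩)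
  · rintro ⟨hab, hav, hbv, hor⟩
    have ha : Function.update φ v (φ u) a = φ a := Function.update_of_ne hav _ _
    have hb : Function.update φ v (φ u) b = φ b := Function.update_of_ne hbv _ _
    have hv : Function.update φ v (φ u) v = φ u := Function.update_self _ _ _
    rcases hor with ⟨h, hne⟩ | ⟨hau, h, hne⟩ | ⟨hbu, h, hne⟩
    · exact ⟨⟨hab, hav, hbv, Or.inl h⟩, by rw [ha, hb] at hne; exact hne⟩
    · refine ⟨⟨hab, hav, hbv, Or.inr (Or.inl ⟨hau, h⟩)⟩, ?_⟩
      rw [hv, hb] at hne; rw [hau]; exact hne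
    · refine ⟨⟨hab, hav, hbv, Or.inr (Or.inr ⟨hbu, h⟩)⟩, ?_⟩
      rw [ha, hv] at hne; rw [hbu]; exact hne

section shift

variable {V : Type*} {q : ℕ} [NeZero q] (G : SimpleGraph V) (v : V)

open Classical in
noncomputable def shiftFun (δ : Fin q) (φ : V → Fin q) : V → Fin q := fun x =>
  if G.Reachable v x ∧ x ≠ v then φ x + δ else φ x

lemma shiftFun_pos (δ : Fin q) (φ : V → Fin q) {x : V} (h1 : G.Reachable v x) (h2 : x ≠ v) :
    shiftFun G v δ φ x = φ x + δ := by
  simp [shiftFun, h1, h2]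

lemma shiftFun_neg (δ : Fin q) (φ : V → Fin q) {x : V} (h : ¬ (G.Reachable v x ∧ x ≠ v)) :
    shiftFun G v δ φ x = φ x := by
  simp only [shiftFun]
  rw [if_neg h]

noncomputable def shiftEquiv' (u : V) (hvu : ¬ G.Reachable v u) :
    (V → Fin q) ≃ (V → Fin q) where
  toFun φ := shiftFun G v (φ v - φ u) φ
  invFun ψ := shiftFun G v (ψ u - ψ v) ψ
  left_inv φ := by
    have hu : ¬ (G.Reachable v u ∧ u ≠ v) := fun h => hvu h.1
    have hv : ¬ (G.Reachable v v ∧ v ≠ v) := fun h => h.2 rfl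
    funext x
    dsimp only
    by_cases hx : G.Reachable v x ∧ x ≠ v
    · rw [shiftFun_neg G v _ _ hu, shiftFun_neg G v _ _ hv,
        shiftFun_pos G v _ _ hx.1 hx.2, shiftFun_pos G v _ _ hx.1 hx.2]
      abel
    · rw [shiftFun_neg G v _ _ hx, shiftFun_neg G v _ _ hx]
  right_inv ψ := by
    have hu : ¬ (G.Reachable v u ∧ u ≠ v) := fun h => hvu h.1
    have hv : ¬ (G.Reachable v v ∧ v ≠ v) := fun h => h.2 rfl
    funext x
    dsimp only
    by_cases hx : G.Reachable v x ∧ x ≠ v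
    · rw [shiftFun_neg G v _ _ hv, shiftFun_neg G v _ _ hu,
        shiftFun_pos G v _ _ hx.1 hx.2, shiftFun_pos G v _ _ hx.1 hx.2]
      abel
    · rw [shiftFun_neg G v _ _ hx, shiftFun_neg G v _ _ hx]

end shift

/-- Lemma 3.5: contracting a pair of disconnected vertices of a disconnected graph `G`
does not decrease the weighted probability sum: `Σ_H |c_H| P[G_q ≅ H] ≤ Σ_H c'_H P[G'_q ≅ H]`
where `G' = G/(u ∼ v)` and `c'_H` is the maximum of `|c_{H'}|` over all `H'` transforming
to `H` by at most one contraction of a disconnected pair. The sums over unlabeled graphs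
are expressed as expectations over uniform colorings, the coefficients being
isomorphism-invariant. -/
theorem contraction_bound {V : Type*} [Fintype V] [DecidableEq V] (q : ℕ) (hq : 0 < q)
    (G : SimpleGraph V) (hcomps : 2 ≤ Nat.card G.ConnectedComponent)
    (u v : V) (huv : ¬ G.Reachable u v)
    (c c' : SimpleGraph V → ℝ)
    (hinv : ∀ H H' : SimpleGraph V, Nonempty (H ≃g H') → c H = c H')
    (hc' : ∀ H : SimpleGraph V,
      IsGreatest {r : ℝ | ∃ H' : SimpleGraph V, TransformsTo H' H ∧ r = |c H'|} (c' H)) :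
    (∑ φ : V → Fin q, |c (delColor G φ)|) / q ^ Fintype.card V ≤
      (∑ φ : V → Fin q, c' (delColor (contractPair G u v) φ)) / q ^ Fintype.card V := by
  classical
  haveI : NeZero q := ⟨hq.ne'⟩
  letI : CommRing (Fin q) := Fin.instCommRing q
  have huveq : u ≠ v := fun h => huv (h ▸ SimpleGraph.Reachable.refl u)
  have hvu : ¬ G.Reachable v u := fun h => huv h.symm
  set E := shiftEquiv' (q := q) G v u hvu with hE
  have hv' : ¬ (G.Reachable v v ∧ v ≠ v) := fun h => h.2 rfl
  have key : ∀ φ : V → Fin q,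
      delColor G (E φ) = delColor G (Function.update φ v (φ u)) := by
    intro φ
    apply delColor_congr
    intro a b hab
    have hEa : ∀ x, E φ x = shiftFun G v (φ v - φ u) φ x := fun _ => rfl
    by_cases hav : a = v
    · subst hav
      have hbv : b ≠ a := hab.ne'
      have hrb : G.Reachable a b := hab.reachable
      rw [hEa, hEa, shiftFun_neg G a _ _ hv', shiftFun_pos G a _ _ hrb hbv,
        Function.update_self, Function.update_of_ne hbv]
      constructor <;> intro h <;> linear_combination h
    · by_cases hbv : b = v
      · subst hbv
        have hra : G.Reachable b a := hab.symm.reachable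
        rw [hEa, hEa, shiftFun_pos G b _ _ hra hav, shiftFun_neg G b _ _ hv',
          Function.update_of_ne hav, Function.update_self]
        constructor <;> intro h <;> linear_combination h
      · rw [Function.update_of_ne hav, Function.update_of_ne hbv, hEa, hEa]
        by_cases hr : G.Reachable v a
        · have hrb : G.Reachable v b := hr.trans hab.reachable
          rw [shiftFun_pos G v _ _ hr hav, shiftFun_pos G v _ _ hrb hbv]
          exact add_left_inj _
        · have hrb : ¬ G.Reachable v b := fun h => hr (h.trans hab.symm.reachable)
          rw [shiftFun_neg G v _ _ (fun h => hr h.1), shiftFun_neg G v _ _ (fun h => hrb h.1)]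
  have sum_eq : ∑ φ : V → Fin q, |c (delColor G φ)| =
      ∑ φ : V → Fin q, |c (delColor G (Function.update φ v (φ u)))| := by
    rw [← Equiv.sum_comp E (fun φ => |c (delColor G φ)|)]
    exact Finset.sum_congr rfl fun φ _ => by rw [key φ]
  rw [sum_eq]
  gcongr with φ hφ
  refine (hc' (delColor (contractPair G u v) φ)).2 ?_
  refine ⟨delColor G (Function.update φ v (φ u)), Or.inr ⟨u, v, huveq, ?_, ?_⟩, rfl⟩
  · have hle : delColor G (Function.update φ v (φ u)) ≤ G := fun {a b} hab => hab.1
    exact fun h => huv (h.mono hle)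
  · rw [← delColor_contract]
    exact ⟨RelIso.refl _⟩
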